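/- Consider the LP: maximize Σ_{i=1}^n Σ_{ℓ=1}^k w^i_ℓ y^i_ℓ subject to Σ_j x_j = k, Σ_{j ∈ C_i} x_j = Σ_ℓ y^i_ℓ for all i, and 0 ≤ x_j, y^i_ℓ ≤ 1. If all weights are strictly positive (w^i_ℓ > 0 for all i, ℓ) and (x, y) is an optimal solution, then there is no pair of candidates j, j' with x_j < 1, x_{j'} > 0, and j dominating j' (N_{j'} ⊊ N_j). -/
import Mathlib


/-- In an optimal solution of the Thiele LP with strictly positive (nonincreasing) weights,
no candidate with `x j < 1` dominates a candidate with `x j' > 0`. -/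
theorem optimal_has_no_domination_pair {n m k : ℕ} (C : Fin n → Finset (Fin m))
    (w : Fin n → Fin k → ℝ)
    (hwpos : ∀ i ℓ, 0 < w i ℓ)
    (hwmono : ∀ i : Fin n, ∀ ℓ ℓ' : Fin k, ℓ ≤ ℓ' → w i ℓ' ≤ w i ℓ)
    (x : Fin m → ℝ) (y : Fin n → Fin k → ℝ)
    (hx : ∀ j, x j ∈ Set.Icc (0 : ℝ) 1)
    (hy : ∀ i ℓ, y i ℓ ∈ Set.Icc (0 : ℝ) 1)
    (hk : ∑ j, x j = k)
    (hcons : ∀ i, ∑ j ∈ C i, x j = ∑ ℓ, y i ℓ)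
    (hopt : ∀ (x' : Fin m → ℝ) (y' : Fin n → Fin k → ℝ),
      (∀ j, x' j ∈ Set.Icc (0 : ℝ) 1) → (∀ i ℓ, y' i ℓ ∈ Set.Icc (0 : ℝ) 1) →
      (∑ j, x' j = k) → (∀ i, ∑ j ∈ C i, x' j = ∑ ℓ, y' i ℓ) →
      ∑ i, ∑ ℓ, w i ℓ * y' i ℓ ≤ ∑ i, ∑ ℓ, w i ℓ * y i ℓ) :
    ¬ ∃ j j' : Fin m, x j < 1 ∧ 0 < x j' ∧
      (Finset.univ.filter (fun i => j' ∈ C i)) ⊂ (Finset.univ.filter (fun i => j ∈ C i)) := by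
  rintro ⟨j, j', hxj, hxj', hss⟩
  have hsub : ∀ i : Fin n, j' ∈ C i → j ∈ C i := by
    intro i hi
    have := hss.1 (Finset.mem_filter.mpr ⟨Finset.mem_univ i, hi⟩)
    exact (Finset.mem_filter.mp this).2
  have hne : j ≠ j' := by
    rintro rfl; exact (ssubset_irrefl _) hss
  obtain ⟨i₀, hi₀j, hi₀j'⟩ : ∃ i : Fin n, j ∈ C i ∧ j' ∉ C i := by
    obtain ⟨i, hi1, hi2⟩ := Finset.exists_of_ssubset hss
    exact ⟨i, (Finset.mem_filter.mp hi1).2,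
      fun h => hi2 (Finset.mem_filter.mpr ⟨Finset.mem_univ i, h⟩)⟩
  set ε := min (1 - x j) (x j') with hεdef
  have hεpos : 0 < ε := lt_min (by linarith) hxj'
  have hεle1 : ε ≤ 1 - x j := min_le_left _ _
  have hεle2 : ε ≤ x j' := min_le_right _ _
  set D : Fin n → ℝ := fun i => (k : ℝ) - ∑ ℓ, y i ℓ with hDdef
  -- slack for voters not approving j'
  have hD : ∀ i : Fin n, j' ∉ C i → x j' ≤ D i := by
    intro i hi
    have hsubset : C i ⊆ Finset.univ.erase j' := by
      intro a ha
      exact Finset.mem_erase.mpr ⟨fun h => hi (h ▸ ha), Finset.mem_univ a⟩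
    have h1 : ∑ j'' ∈ C i, x j'' ≤ ∑ j'' ∈ Finset.univ.erase j', x j'' :=
      Finset.sum_le_sum_of_subset_of_nonneg hsubset (fun a _ _ => (hx a).1)
    have h2 : ∑ j'' ∈ Finset.univ.erase j', x j'' = (k : ℝ) - x j' := by
      rw [Finset.sum_erase_eq_sub (Finset.mem_univ j'), hk]
    have := hcons i
    simp only [hDdef]
    linarith [h1, h2, this]
  have hDpos : ∀ i : Fin n, j' ∉ C i → 0 < D i := fun i hi => lt_of_lt_of_le hxj' (hD i hi)
  have hDsum : ∀ i : Fin n, ∑ ℓ : Fin k, (1 - y i ℓ) = D i := by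
    intro i
    simp [hDdef, Finset.sum_sub_distrib]
  -- new solution
  set x' : Fin m → ℝ := fun j₁ =>
    x j₁ + (if j₁ = j then ε else 0) - (if j₁ = j' then ε else 0) with hx'def
  set y' : Fin n → Fin k → ℝ := fun i ℓ =>
    if j ∈ C i ∧ j' ∉ C i then y i ℓ + ε * (1 - y i ℓ) / D i else y i ℓ with hy'def
  have hx'mem : ∀ j₁, x' j₁ ∈ Set.Icc (0 : ℝ) 1 := by
    intro j₁
    simp only [hx'def]
    rcases eq_or_ne j₁ j with rfl | h1
    · rw [if_pos rfl, if_neg hne]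
      constructor <;> simp <;> linarith [(hx j₁).1]
    · rw [if_neg h1]
      rcases eq_or_ne j₁ j' with rfl | h2
      · rw [if_pos rfl]
        constructor <;> simp <;> linarith [(hx j₁).2]
      · rw [if_neg h2]; simpa using hx j₁
  have hy'mem : ∀ i ℓ, y' i ℓ ∈ Set.Icc (0 : ℝ) 1 := by
    intro i ℓ
    simp only [hy'def]
    split_ifs with h
    · have hDp := hDpos i h.2
      have hDε := le_trans hεle2 (hD i h.2)
      have hy1 := (hy i ℓ).1
      have hy2 := (hy i ℓ).2
      constructor
      · have : 0 ≤ ε * (1 - y i ℓ) / D i :=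
          div_nonneg (mul_nonneg hεpos.le (by linarith)) hDp.le
        linarith
      · have : ε * (1 - y i ℓ) / D i ≤ 1 - y i ℓ := by
          rw [div_le_iff₀ hDp]
          nlinarith
        linarith
    · exact hy i ℓ
  have hx'sum : ∑ j₁, x' j₁ = (k : ℝ) := by
    simp only [hx'def]
    rw [Finset.sum_sub_distrib, Finset.sum_add_distrib,
      Finset.sum_ite_eq' Finset.univ j (fun _ => ε),
      Finset.sum_ite_eq' Finset.univ j' (fun _ => ε)]
    simp [hk]
  have hx'cons : ∀ i, ∑ j₁ ∈ C i, x' j₁ = ∑ ℓ, y' i ℓ := by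
    intro i
    have hxsum : ∑ j₁ ∈ C i, x' j₁ = ∑ j₁ ∈ C i, x j₁
        + (if j ∈ C i then ε else 0) - (if j' ∈ C i then ε else 0) := by
      simp only [hx'def]
      rw [Finset.sum_sub_distrib, Finset.sum_add_distrib,
        Finset.sum_ite_eq' (C i) j (fun _ => ε),
        Finset.sum_ite_eq' (C i) j' (fun _ => ε)]
    by_cases hj : j ∈ C i
    · by_cases hj' : j' ∈ C i
      · rw [hxsum, if_pos hj, if_pos hj']
        have : ∀ ℓ, y' i ℓ = y i ℓ := by
          intro ℓ; simp only [hy'def]; rw [if_neg (by tauto)]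
        simp only [this]
        rw [hcons i]; ring
      · rw [hxsum, if_pos hj, if_neg hj']
        have hyℓ : ∀ ℓ, y' i ℓ = y i ℓ + ε * (1 - y i ℓ) / D i := by
          intro ℓ; simp only [hy'def]; rw [if_pos ⟨hj, hj'⟩]
        simp only [hyℓ]
        rw [Finset.sum_add_distrib]
        have : ∑ ℓ : Fin k, ε * (1 - y i ℓ) / D i = ε * D i / D i := by
          rw [← Finset.sum_div, ← Finset.mul_sum, hDsum i]
        rw [this, mul_div_assoc, div_self (ne_of_gt (hDpos i hj')), hcons i]
        ring
    · have hj' : j' ∉ C i := fun h => hj (hsub i h)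
      rw [hxsum, if_neg hj, if_neg hj']
      have : ∀ ℓ, y' i ℓ = y i ℓ := by
        intro ℓ; simp only [hy'def]; rw [if_neg (by tauto)]
      simp only [this]
      rw [hcons i]; ring
  -- objective strictly increases
  have hobjle : ∀ i : Fin n, ∑ ℓ, w i ℓ * y i ℓ ≤ ∑ ℓ, w i ℓ * y' i ℓ := by
    intro i
    apply Finset.sum_le_sum
    intro ℓ _
    apply mul_le_mul_of_nonneg_left _ (le_of_lt (hwpos i ℓ))
    simp only [hy'def]
    split_ifs with h
    · have hDp := hDpos i h.2
      have hy2 := (hy i ℓ).2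
      have : 0 ≤ ε * (1 - y i ℓ) / D i :=
        div_nonneg (mul_nonneg hεpos.le (by linarith)) hDp.le
      linarith
    · exact le_refl _
  have hobjlt : ∑ ℓ, w i₀ ℓ * y i₀ ℓ < ∑ ℓ, w i₀ ℓ * y' i₀ ℓ := by
    have hDp := hDpos i₀ hi₀j'
    obtain ⟨ℓ₀, hℓ₀⟩ : ∃ ℓ : Fin k, y i₀ ℓ < 1 := by
      by_contra hcon
      push_neg at hcon
      have : ∑ ℓ : Fin k, (1 - y i₀ ℓ) ≤ 0 :=
        Finset.sum_nonpos (fun ℓ _ => by linarith [hcon ℓ])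
      rw [hDsum i₀] at this
      linarith
    apply Finset.sum_lt_sum
    · intro ℓ _
      apply mul_le_mul_of_nonneg_left _ (le_of_lt (hwpos i₀ ℓ))
      simp only [hy'def]
      rw [if_pos ⟨hi₀j, hi₀j'⟩]
      have hy2 := (hy i₀ ℓ).2
      have : 0 ≤ ε * (1 - y i₀ ℓ) / D i₀ :=
        div_nonneg (mul_nonneg hεpos.le (by linarith)) hDp.le
      linarith
    · refine ⟨ℓ₀, Finset.mem_univ ℓ₀, ?_⟩
      apply mul_lt_mul_of_pos_left _ (hwpos i₀ ℓ₀)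
      simp only [hy'def]
      rw [if_pos ⟨hi₀j, hi₀j'⟩]
      have : 0 < ε * (1 - y i₀ ℓ₀) / D i₀ :=
        div_pos (mul_pos hεpos (by linarith)) hDp
      linarith
  have htotal : ∑ i, ∑ ℓ, w i ℓ * y i ℓ < ∑ i, ∑ ℓ, w i ℓ * y' i ℓ :=
    Finset.sum_lt_sum (fun i _ => hobjle i) ⟨i₀, Finset.mem_univ i₀, hobjlt⟩
  exact absurd (hopt x' y' hx'mem hy'mem hx'sum hx'cons) (not_le.mpr htotal)
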